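/- Let p ∈ (0,1), let b : Ω → ℝ be essentially bounded and measurable, let a > 0 be real, and let v : Ω → ℝ be measurable with v(x) > 0 for a.e. x ∈ Ω, such that x ↦ |v(x)|^(p+1) is integrable and x ↦ h(x)·v(x)^(1−γ) is integrable on Ω. Define φ : (0, ∞) → ℝ by φ(t) = (a/2)·t² + (1/(γ−1))·∫_Ω h(x)·g(t·v(x))^(1−γ) dx − (1/(p+1))·∫_Ω b(x)·g(t·v(x))^(p+1) dx. Then φ(t) → +∞ as t → 0⁺, φ(t) → +∞ as t → +∞, and there exists t₀ > 0 with φ(t₀) = inf{ φ(t) : t > 0 }. -/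

import Mathlib

open MeasureTheory Filter
open scoped ENNReal NNReal

section gfacts
variable {g : ℝ → ℝ} (hg0 : g 0 = 0)
  (hg : ∀ t : ℝ, HasDerivAt g ((1 + 2 * g t ^ 2) ^ (-(1 / 2) : ℝ)) t)

include hg

lemma g_cont : Continuous g :=
  continuous_iff_continuousAt.2 fun t => (hg t).continuousAt

omit hg in
lemma g_deriv_pos (t : ℝ) : 0 < (1 + 2 * g t ^ 2) ^ (-(1 / 2) : ℝ) :=
  Real.rpow_pos_of_pos (by positivity) _

omit hg in
lemma g_deriv_le_one (t : ℝ) : (1 + 2 * g t ^ 2) ^ (-(1 / 2) : ℝ) ≤ 1 :=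
  Real.rpow_le_one_of_one_le_of_nonpos (by nlinarith [sq_nonneg (g t)]) (by norm_num)

lemma g_mono : StrictMono g :=
  strictMono_of_deriv_pos fun t => by rw [(hg t).deriv]; exact g_deriv_pos t

include hg0

lemma g_lip : ∀ t : ℝ, |g t| ≤ |t| := by
  intro t
  have hd : Differentiable ℝ g := fun t => (hg t).differentiableAt
  have := lipschitzWith_of_nnnorm_deriv_le (C := 1) hd (fun t => by
    rw [(hg t).deriv]
    simp only [← NNReal.coe_le_coe, coe_nnnorm, Real.norm_eq_abs, NNReal.coe_one]
    rw [abs_of_pos (g_deriv_pos t)]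
    exact g_deriv_le_one t)
  have h2 := this.dist_le_mul t 0
  simpa [hg0, Real.dist_eq] using h2

lemma g_pos {t : ℝ} (ht : 0 < t) : 0 < g t := by
  have := g_mono hg ht; rwa [hg0] at this

lemma g_nonneg {t : ℝ} (ht : 0 ≤ t) : 0 ≤ g t := by
  have := (g_mono hg).monotone ht; rwa [hg0] at this

lemma g_le_self {t : ℝ} (ht : 0 ≤ t) : g t ≤ t := by
  have := g_lip hg0 hg t
  have h2 := abs_le.1 this
  rw [abs_of_nonneg ht] at h2
  linarith [h2.2]

/-- lower bound: `g s ≥ c * min s 1` for some `c > 0`. -/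
lemma g_lower : ∃ c : ℝ, 0 < c ∧ ∀ s : ℝ, 0 ≤ s → c * min s 1 ≤ g s := by
  set c : ℝ := (1 + 2 * g 1 ^ 2) ^ (-(1 / 2) : ℝ) with hc
  have hcpos : (0:ℝ) < c := g_deriv_pos 1
  refine ⟨min c (g 1), lt_min hcpos (g_pos hg0 hg one_pos), fun s hs => ?_⟩
  rcases le_or_gt s 1 with h1 | h1
  · have key : c * s ≤ g s := by
      have hmono : MonotoneOn (fun t => g t - c * t) (Set.Icc 0 1) := by
        apply monotoneOn_of_deriv_nonneg (convex_Icc 0 1)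
        · exact ((g_cont hg).sub (continuous_const.mul continuous_id)).continuousOn
        · intro t _
          exact ((hg t).sub ((hasDerivAt_id t).const_mul c)).differentiableAt.differentiableWithinAt
        · intro t ht
          rw [interior_Icc] at ht
          have hdt : deriv (fun t => g t - c * t) t
              = (1 + 2 * g t ^ 2) ^ (-(1 / 2) : ℝ) - c := by
            have := ((hg t).sub ((hasDerivAt_id t).const_mul c)).deriv
            exact this.trans (by ring)
          rw [hdt, sub_nonneg, hc]
          apply Real.rpow_le_rpow_of_nonpos (by positivity) _ (by norm_num)
          have hg1 : g t ≤ g 1 := (g_mono hg).monotone ht.2.le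
          have hg0' : 0 ≤ g t := g_nonneg hg0 hg ht.1.le
          nlinarith
      have := hmono (Set.mem_Icc.2 ⟨le_refl 0, zero_le_one⟩) (Set.mem_Icc.2 ⟨hs, h1⟩) hs
      simp only [hg0, mul_zero, sub_zero, zero_sub] at this
      linarith
    rw [min_eq_left h1]
    calc min c (g 1) * s ≤ c * s := mul_le_mul_of_nonneg_right (min_le_left _ _) hs
      _ ≤ g s := key
  · rw [min_eq_right h1.le, mul_one]
    calc min c (g 1) ≤ g 1 := min_le_right _ _
      _ ≤ g s := (g_mono hg).monotone h1.le

end gfacts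

set_option maxHeartbeats 1000000 in
/-- behaviour of the fiber map in the sublinear case: it blows up
at `0⁺` and at `+∞` and attains its infimum on `(0,∞)`. -/
theorem stmt_15 (N : ℕ) (hN : 3 ≤ N)
    (Ω : Set (EuclideanSpace ℝ (Fin N))) (hΩo : IsOpen Ω)
    (hΩb : Bornology.IsBounded Ω) (hΩpos : 0 < volume Ω)
    (γ : ℝ) (hγ : 1 < γ)
    (g : ℝ → ℝ) (hg0 : g 0 = 0)
    (hg : ∀ t : ℝ, HasDerivAt g ((1 + 2 * g t ^ 2) ^ (-(1 / 2) : ℝ)) t)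
    (h : EuclideanSpace ℝ (Fin N) → ℝ)
    (hh_int : IntegrableOn h Ω)
    (hh_pos : ∀ᵐ x ∂(volume.restrict Ω), 0 < h x)
    (p : ℝ) (hp0 : 0 < p) (hp1 : p < 1)
    (b : EuclideanSpace ℝ (Fin N) → ℝ)
    (hb : MemLp b ⊤ (volume.restrict Ω))
    (a : ℝ) (ha : 0 < a)
    (v : EuclideanSpace ℝ (Fin N) → ℝ)
    (hv_meas : AEMeasurable v (volume.restrict Ω))
    (hv_pos : ∀ᵐ x ∂(volume.restrict Ω), 0 < v x)
    (hv_intp : IntegrableOn (fun x => |v x| ^ (p + 1)) Ω)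
    (hv_inth : IntegrableOn (fun x => h x * v x ^ (1 - γ)) Ω)
    (φ : ℝ → ℝ)
    (hφ : ∀ t : ℝ, φ t =
      a / 2 * t ^ 2 + (1 / (γ - 1)) * ∫ x in Ω, h x * g (t * v x) ^ (1 - γ)
        - (1 / (p + 1)) * ∫ x in Ω, b x * g (t * v x) ^ (p + 1)) :
    Tendsto φ (nhdsWithin 0 (Set.Ioi 0)) atTop ∧
    Tendsto φ atTop atTop ∧
    ∃ t₀ : ℝ, 0 < t₀ ∧ φ t₀ = sInf (φ '' Set.Ioi 0) := by
  set μ := volume.restrict Ω with hμdef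
  have hγ1 : (0:ℝ) < γ - 1 := by linarith
  have he : (1 - γ : ℝ) ≤ 0 := by linarith
  have hp1' : (0:ℝ) < p + 1 := by linarith
  obtain ⟨c, hc, hclow⟩ := g_lower hg0 hg
  -- essential bound on b
  set Cb := (eLpNormEssSup b μ).toReal with hCbdef
  have hCb0 : 0 ≤ Cb := ENNReal.toReal_nonneg
  have hbC : ∀ᵐ x ∂μ, |b x| ≤ Cb := by
    have h1 : eLpNormEssSup b μ < ⊤ := by
      have := hb.2; rwa [eLpNorm_exponent_top] at this
    filter_upwards [ae_le_eLpNormEssSup (f := b) (μ := μ)] with x hx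
    have h2 : ((‖b x‖₊ : ℝ≥0∞)).toReal ≤ Cb := ENNReal.toReal_mono h1.ne hx
    simpa [Real.norm_eq_abs] using h2
  -- measurability
  have hv_mul : ∀ t : ℝ, AEMeasurable (fun x => g (t * v x)) μ := fun t =>
    (g_cont hg).measurable.comp_aemeasurable (hv_meas.const_mul t)
  have hgq_meas : ∀ t q : ℝ, AEStronglyMeasurable (fun x => g (t * v x) ^ q) μ := fun t q =>
    ((hv_mul t).pow aemeasurable_const).aestronglyMeasurable
  have hh_meas : AEStronglyMeasurable h μ := hh_int.1
  have hb_meas : AEStronglyMeasurable b μ := hb.1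
  -- pointwise bound for g s ^ (1-γ)
  have hgb : ∀ s : ℝ, 0 < s → g s ^ (1-γ) ≤ c ^ (1-γ) * (s ^ (1-γ) + 1) := by
    intro s hs
    have hmin : 0 < min s 1 := lt_min hs one_pos
    have h1 : (0:ℝ) < c * min s 1 := mul_pos hc hmin
    have h2 : g s ^ (1-γ) ≤ (c * min s 1) ^ (1-γ) :=
      Real.rpow_le_rpow_of_nonpos h1 (hclow s hs.le) he
    rw [Real.mul_rpow hc.le hmin.le] at h2
    refine h2.trans (mul_le_mul_of_nonneg_left ?_ (Real.rpow_nonneg hc.le _))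
    rcases le_or_gt s 1 with h3 | h3
    · rw [min_eq_left h3]; nlinarith [Real.rpow_nonneg hs.le (1-γ)]
    · rw [min_eq_right h3.le, Real.one_rpow]
      nlinarith [Real.rpow_nonneg hs.le (1-γ)]
  -- integrability of the h-term
  have hI : ∀ t : ℝ, 0 < t → Integrable (fun x => h x * g (t * v x) ^ (1-γ)) μ := by
    intro t ht
    have hdom : Integrable (fun x => c ^ (1-γ) * (t ^ (1-γ) * (h x * v x ^ (1-γ)) + h x)) μ :=
      ((hv_inth.const_mul _).add hh_int).const_mul _
    refine hdom.mono'
      ((hh_meas.aemeasurable.mul (hgq_meas t (1-γ)).aemeasurable).aestronglyMeasurable) ?_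
    filter_upwards [hh_pos, hv_pos] with x hx hvx
    have htv : 0 < t * v x := mul_pos ht hvx
    rw [Real.norm_eq_abs,
      abs_of_nonneg (mul_nonneg hx.le (Real.rpow_nonneg (g_nonneg hg0 hg htv.le) _))]
    calc h x * g (t*v x) ^ (1-γ) ≤ h x * (c ^ (1-γ) * ((t*v x) ^ (1-γ) + 1)) :=
          mul_le_mul_of_nonneg_left (hgb _ htv) hx.le
      _ = c ^ (1-γ) * (t ^ (1-γ) * (h x * v x ^ (1-γ)) + h x) := by
          rw [Real.mul_rpow ht.le hvx.le]; ring
  -- nonnegativity of the h-term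
  have hHnn : ∀ t : ℝ, 0 < t → 0 ≤ ∫ x, h x * g (t * v x) ^ (1-γ) ∂μ := by
    intro t ht
    refine integral_nonneg_of_ae ?_
    filter_upwards [hh_pos, hv_pos] with x hx hvx
    exact mul_nonneg hx.le (Real.rpow_nonneg (g_nonneg hg0 hg (mul_pos ht hvx).le) _)
  -- positivity of Ih
  set Ih := ∫ x, h x * v x ^ (1-γ) ∂μ with hIhdef
  have hIh_pos : 0 < Ih := by
    rw [hIhdef, integral_pos_iff_support_of_nonneg_ae ?_ hv_inth]
    · have hae : ∀ᵐ x ∂μ, x ∈ Function.support fun x => h x * v x ^ (1-γ) := by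
        filter_upwards [hh_pos, hv_pos] with x hx hvx
        exact ne_of_gt (mul_pos hx (Real.rpow_pos_of_pos hvx _))
      by_contra hz
      push_neg at hz
      have hz0 : μ (Function.support fun x => h x * v x ^ (1-γ)) = 0 := le_antisymm hz zero_le
      have hc0 : μ (Function.support fun x => h x * v x ^ (1-γ))ᶜ = 0 := by
        rw [Set.compl_def]
        exact ae_iff.1 hae
      have : μ Set.univ = 0 := by
        have := measure_union_le (μ := μ) (Function.support fun x => h x * v x ^ (1-γ))
          (Function.support fun x => h x * v x ^ (1-γ))ᶜ
        rw [Set.union_compl_self, hz0, hc0] at this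
        simpa using this
      rw [Measure.restrict_apply_univ] at this
      exact absurd this (ne_of_gt hΩpos)
    · filter_upwards [hh_pos, hv_pos] with x hx hvx
      exact mul_nonneg hx.le (Real.rpow_nonneg hvx.le _)
  -- Iv
  set Iv := ∫ x, |v x| ^ (p+1) ∂μ with hIvdef
  have hIv0 : 0 ≤ Iv := integral_nonneg fun x => Real.rpow_nonneg (abs_nonneg _) _
  -- bound on b-term
  have hB : ∀ t : ℝ, 0 ≤ t → |∫ x, b x * g (t * v x) ^ (p+1) ∂μ| ≤ Cb * t ^ (p+1) * Iv := by
    intro t ht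
    have hint : Integrable (fun x => Cb * t ^ (p+1) * |v x| ^ (p+1)) μ := hv_intp.const_mul _
    have hbnd : ∀ᵐ x ∂μ, ‖b x * g (t * v x) ^ (p+1)‖ ≤ Cb * t ^ (p+1) * |v x| ^ (p+1) := by
      filter_upwards [hbC, hv_pos] with x hbx hvx
      have h0 : (0:ℝ) ≤ t * v x := mul_nonneg ht hvx.le
      have h1 : 0 ≤ g (t * v x) := g_nonneg hg0 hg h0
      have h2 : g (t * v x) ≤ t * |v x| := by
        rw [abs_of_pos hvx]; exact g_le_self hg0 hg h0
      rw [Real.norm_eq_abs, abs_mul, abs_of_nonneg (Real.rpow_nonneg h1 _)]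
      calc |b x| * g (t*v x) ^ (p+1) ≤ Cb * ((t * |v x|) ^ (p+1)) :=
            mul_le_mul hbx (Real.rpow_le_rpow h1 h2 hp1'.le) (Real.rpow_nonneg h1 _) hCb0
        _ = Cb * t ^ (p+1) * |v x| ^ (p+1) := by rw [Real.mul_rpow ht (abs_nonneg _)]; ring
    have := norm_integral_le_of_norm_le hint hbnd
    rw [Real.norm_eq_abs] at this
    refine this.trans_eq ?_
    rw [integral_const_mul]
  -- lower bound on h-term
  have hHlb : ∀ t : ℝ, 0 < t → t ^ (1-γ) * Ih ≤ ∫ x, h x * g (t * v x) ^ (1-γ) ∂μ := by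
    intro t ht
    have hmono := integral_mono_ae (hv_inth.const_mul (t ^ (1-γ))) (hI t ht) ?_
    · rw [integral_const_mul] at hmono; exact hmono
    · filter_upwards [hh_pos, hv_pos] with x hx hvx
      have htv : 0 < t * v x := mul_pos ht hvx
      have hgpos : 0 < g (t * v x) := g_pos hg0 hg htv
      have hle : g (t * v x) ≤ t * v x := g_le_self hg0 hg htv.le
      have h1 : (t * v x) ^ (1-γ) ≤ g (t*v x) ^ (1-γ) :=
        Real.rpow_le_rpow_of_nonpos hgpos hle he
      have h2 : t ^ (1-γ) * v x ^ (1-γ) = (t * v x) ^ (1-γ) :=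
        (Real.mul_rpow ht.le hvx.le).symm
      calc t ^ (1-γ) * (h x * v x ^ (1-γ)) = h x * (t ^ (1-γ) * v x ^ (1-γ)) := by ring
        _ = h x * (t * v x) ^ (1-γ) := by rw [h2]
        _ ≤ h x * g (t*v x) ^ (1-γ) := mul_le_mul_of_nonneg_left h1 hx.le
  -- finiteness of the measure and rewriting of φ
  have hμfin : μ Set.univ < ⊤ := by
    rw [Measure.restrict_apply_univ]; exact hΩb.measure_lt_top
  set m : ℝ := (μ Set.univ).toReal with hmdef
  have hm0 : 0 ≤ m := ENNReal.toReal_nonneg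
  haveI : IsFiniteMeasure μ := ⟨hμfin⟩
  set KB : ℝ := m / (γ - 1) * (1 / (p + 1)) with hKBdef
  have hKB0 : 0 ≤ KB := by positivity
  have hφ' : ∀ t : ℝ, 0 < t →
      φ t = a / 2 * t ^ 2 + (1 / (γ - 1)) * (∫ x, h x * g (t * v x) ^ (1 - γ) ∂μ)
        - KB * ∫ x, b x * g (t * v x) ^ (p + 1) ∂μ := by
    intro t ht
    rw [hφ t, integral_sub (hI t ht) (integrable_const _), integral_const, smul_eq_mul,
      hKBdef]
    have hmr : μ.real Set.univ = m := rfl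
    rw [hmr]
    ring
  -- continuity on (0,∞)
  have hcont : ∀ t₀ : ℝ, 0 < t₀ → ContinuousAt φ t₀ := by
    intro t₀ ht₀
    have hHcont : ContinuousAt (fun t => ∫ x, h x * g (t * v x) ^ (1-γ) ∂μ) t₀ := by
      apply continuousAt_of_dominated (bound := fun x => h x * g ((t₀/2) * v x) ^ (1-γ))
      · exact Eventually.of_forall fun t =>
          (hh_meas.aemeasurable.mul (hgq_meas t (1-γ)).aemeasurable).aestronglyMeasurable
      · filter_upwards [Ioi_mem_nhds (half_lt_self ht₀)] with t ht
        filter_upwards [hh_pos, hv_pos] with x hx hvx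
        have ht2 : (0:ℝ) < t₀/2 := half_pos ht₀
        have htpos : (0:ℝ) < t := lt_trans ht2 ht
        have h0 : 0 < (t₀/2) * v x := mul_pos ht2 hvx
        have h1 : g ((t₀/2) * v x) ≤ g (t * v x) :=
          (g_mono hg).monotone (mul_le_mul_of_nonneg_right (le_of_lt ht) hvx.le)
        have h2 : g (t * v x) ^ (1-γ) ≤ g ((t₀/2) * v x) ^ (1-γ) :=
          Real.rpow_le_rpow_of_nonpos (g_pos hg0 hg h0) h1 he
        rw [Real.norm_eq_abs, abs_of_nonneg (mul_nonneg hx.le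
          (Real.rpow_nonneg (g_nonneg hg0 hg (mul_pos htpos hvx).le) _))]
        exact mul_le_mul_of_nonneg_left h2 hx.le
      · exact hI (t₀/2) (half_pos ht₀)
      · filter_upwards [hv_pos] with x hvx
        have hgx : g (t₀ * v x) ≠ 0 := ne_of_gt (g_pos hg0 hg (mul_pos ht₀ hvx))
        exact continuousAt_const.mul
          ((((g_cont hg).comp (continuous_id.mul continuous_const)).continuousAt).rpow_const
            (Or.inl hgx))
    have hBcont : ContinuousAt (fun t => ∫ x, b x * g (t * v x) ^ (p+1) ∂μ) t₀ := by
      apply continuousAt_of_dominated (bound := fun x => Cb * (2*t₀) ^ (p+1) * |v x| ^ (p+1))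
      · exact Eventually.of_forall fun t =>
          (hb_meas.aemeasurable.mul (hgq_meas t (p+1)).aemeasurable).aestronglyMeasurable
      · filter_upwards [Ioo_mem_nhds ht₀ (by linarith : t₀ < 2*t₀)] with t ht
        filter_upwards [hbC, hv_pos] with x hbx hvx
        have h0 : (0:ℝ) ≤ t * v x := mul_nonneg ht.1.le hvx.le
        have h1 : 0 ≤ g (t * v x) := g_nonneg hg0 hg h0
        have h2 : g (t * v x) ≤ (2*t₀) * |v x| := by
          calc g (t * v x) ≤ t * v x := g_le_self hg0 hg h0
            _ ≤ (2*t₀) * |v x| := by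
                rw [abs_of_pos hvx]
                exact mul_le_mul_of_nonneg_right ht.2.le hvx.le
        rw [Real.norm_eq_abs, abs_mul, abs_of_nonneg (Real.rpow_nonneg h1 _)]
        calc |b x| * g (t*v x) ^ (p+1) ≤ Cb * (((2*t₀) * |v x|) ^ (p+1)) :=
              mul_le_mul hbx (Real.rpow_le_rpow h1 h2 hp1'.le) (Real.rpow_nonneg h1 _) hCb0
          _ = Cb * (2*t₀) ^ (p+1) * |v x| ^ (p+1) := by
              rw [Real.mul_rpow (by linarith) (abs_nonneg _)]; ring
      · exact hv_intp.const_mul _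
      · refine Eventually.of_forall fun x => ?_
        exact continuousAt_const.mul
          ((((g_cont hg).comp (continuous_id.mul continuous_const)).continuousAt).rpow_const
            (Or.inr hp1'.le))
    have hψcont : ContinuousAt (fun t => a / 2 * t ^ 2
        + (1 / (γ - 1)) * (∫ x, h x * g (t * v x) ^ (1 - γ) ∂μ)
        - KB * ∫ x, b x * g (t * v x) ^ (p + 1) ∂μ) t₀ :=
      (((continuous_const.mul (continuous_pow 2)).continuousAt.add
        (continuousAt_const.mul hHcont)).sub (continuousAt_const.mul hBcont))
    refine hψcont.congr ?_
    filter_upwards [Ioi_mem_nhds ht₀] with t ht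
    exact (hφ' t ht).symm
  -- Goal 1
  have goal1 : Tendsto φ (nhdsWithin 0 (Set.Ioi 0)) atTop := by
    have hK : ∀ t ∈ Set.Ioo (0:ℝ) 1,
        (1/(γ-1)) * (t ^ (1-γ) * Ih) + -(KB * (Cb * Iv)) ≤ φ t := by
      intro t ht
      rw [hφ' t ht.1]
      have e1 := hHlb t ht.1
      have e2 := hB t ht.1.le
      have e3 : Cb * t ^ (p+1) * Iv ≤ Cb * Iv := by
        have h4 : t ^ (p+1) ≤ 1 := Real.rpow_le_one ht.1.le ht.2.le hp1'.le
        calc Cb * t ^ (p+1) * Iv ≤ Cb * 1 * Iv :=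
              mul_le_mul_of_nonneg_right (mul_le_mul_of_nonneg_left h4 hCb0) hIv0
          _ = Cb * Iv := by ring
      have e4 : (∫ x, b x * g (t * v x) ^ (p+1) ∂μ) ≤ Cb * Iv :=
        le_trans (le_abs_self _) (e2.trans e3)
      have e5 : (1/(γ-1)) * (t ^ (1-γ) * Ih) ≤ (1/(γ-1)) * ∫ x, h x * g (t * v x) ^ (1-γ) ∂μ :=
        mul_le_mul_of_nonneg_left e1 (by positivity)
      have e6 : KB * (∫ x, b x * g (t * v x) ^ (p+1) ∂μ) ≤ KB * (Cb * Iv) :=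
        mul_le_mul_of_nonneg_left e4 hKB0
      linarith [e5, e6, mul_nonneg (by linarith : (0:ℝ) ≤ a/2) (sq_nonneg t)]
    have hlow : Tendsto (fun t => (1/(γ-1)) * (t ^ (1-γ) * Ih) + -(KB * (Cb * Iv)))
        (nhdsWithin 0 (Set.Ioi 0)) atTop := by
      apply tendsto_atTop_add_const_right
      apply Tendsto.const_mul_atTop (by positivity : (0:ℝ) < 1/(γ-1))
      apply Tendsto.atTop_mul_const hIh_pos
      have h1 : Tendsto (fun t : ℝ => (t⁻¹) ^ (γ-1)) (nhdsWithin 0 (Set.Ioi 0)) atTop :=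
        (tendsto_rpow_atTop (by linarith : (0:ℝ) < γ-1)).comp tendsto_inv_nhdsGT_zero
      refine h1.congr' ?_
      filter_upwards [self_mem_nhdsWithin] with t ht
      have ht' : (0:ℝ) < t := ht
      rw [Real.inv_rpow ht'.le, ← Real.rpow_neg ht'.le, neg_sub]
    refine tendsto_atTop_mono' _ ?_ hlow
    filter_upwards [Ioo_mem_nhdsGT_of_mem (Set.mem_Ico.2 ⟨le_refl (0:ℝ), one_pos⟩)] with t ht
    exact hK t ht
  -- Goal 2
  have goal2 : Tendsto φ atTop atTop := by
    have hcv : Tendsto (fun t : ℝ => KB * Cb * Iv * t ^ (p-1)) atTop (nhds 0) := by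
      have h1 := (tendsto_rpow_neg_atTop (y := 1-p) (by linarith)).const_mul (KB * Cb * Iv)
      rw [mul_zero] at h1
      refine h1.congr fun t => ?_
      rw [show -(1-p) = p - 1 by ring]
    have h5 : ∀ᶠ t in atTop, a/4 * t^2 ≤ φ t := by
      filter_upwards [hcv.eventually (gt_mem_nhds (by positivity : (0:ℝ) < a/4)),
        eventually_ge_atTop (1:ℝ)] with t h6 h7
      have ht : (0:ℝ) < t := lt_of_lt_of_le one_pos h7
      rw [hφ' t ht]
      have e1 := hHnn t ht
      have e2 := hB t ht.le
      have e3 : t ^ (p+1) = t^2 * t ^ (p-1) := by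
        rw [← Real.rpow_natCast t 2, ← Real.rpow_add ht]
        congr 1
        push_cast
        ring
      have e4 : KB * (∫ x, b x * g (t * v x) ^ (p+1) ∂μ) ≤ a/4 * t^2 := by
        have h8 : (∫ x, b x * g (t * v x) ^ (p+1) ∂μ) ≤ Cb * t ^ (p+1) * Iv :=
          le_trans (le_abs_self _) e2
        have h9 : KB * (Cb * t ^ (p+1) * Iv) = t^2 * (KB * Cb * Iv * t ^ (p-1)) := by
          rw [e3]; ring
        have h10 : KB * (∫ x, b x * g (t * v x) ^ (p+1) ∂μ)
            ≤ t^2 * (KB * Cb * Iv * t ^ (p-1)) := by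
          rw [← h9]; exact mul_le_mul_of_nonneg_left h8 hKB0
        refine h10.trans ?_
        calc t^2 * (KB * Cb * Iv * t ^ (p-1)) ≤ t^2 * (a/4) :=
              mul_le_mul_of_nonneg_left h6.le (sq_nonneg t)
          _ = a/4 * t^2 := by ring
      have e5 : 0 ≤ (1/(γ-1)) * ∫ x, h x * g (t * v x) ^ (1-γ) ∂μ :=
        mul_nonneg (by positivity) e1
      linarith [e4, e5, mul_nonneg (by linarith : (0:ℝ) ≤ a/4) (sq_nonneg t)]
    refine tendsto_atTop_mono' _ h5 ?_
    exact Tendsto.const_mul_atTop (by positivity)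
      (tendsto_pow_atTop (by norm_num : (2:ℕ) ≠ 0))
  refine ⟨goal1, goal2, ?_⟩
  -- Goal 3
  have hgt0 : ∀ᶠ t in nhdsWithin 0 (Set.Ioi 0), φ 1 < φ t := goal1.eventually_gt_atTop (φ 1)
  obtain ⟨δ, hδmem, hδ⟩ := mem_nhdsGT_iff_exists_Ioo_subset.1 hgt0
  have hδpos : (0:ℝ) < δ := hδmem
  have hgtM : ∀ᶠ t in atTop, φ 1 < φ t := goal2.eventually_gt_atTop (φ 1)
  obtain ⟨M, hM⟩ := eventually_atTop.1 hgtM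
  set δ₀ : ℝ := min (δ/2) 1 with hδ₀def
  have hδ₀pos : 0 < δ₀ := lt_min (half_pos hδpos) one_pos
  have hδ₀le1 : δ₀ ≤ 1 := min_le_right _ _
  have hδ₀ltδ : δ₀ < δ := lt_of_le_of_lt (min_le_left _ _) (half_lt_self hδpos)
  set M' : ℝ := max M 1 with hM'def
  have hM'ge1 : (1:ℝ) ≤ M' := le_max_right _ _
  have hsub : δ₀ ≤ M' := hδ₀le1.trans hM'ge1
  obtain ⟨t₀, ht₀mem, ht₀min⟩ := isCompact_Icc.exists_isMinOn (Set.nonempty_Icc.2 hsub)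
    (fun t ht => ((hcont t (lt_of_lt_of_le hδ₀pos ht.1)).continuousWithinAt))
  have ht₀pos : 0 < t₀ := lt_of_lt_of_le hδ₀pos ht₀mem.1
  have h1mem : (1:ℝ) ∈ Set.Icc δ₀ M' := ⟨hδ₀le1, hM'ge1⟩
  have hφt₀le1 : φ t₀ ≤ φ 1 := ht₀min h1mem
  have hglobal : ∀ t : ℝ, 0 < t → φ t₀ ≤ φ t := by
    intro t ht
    rcases lt_or_ge t δ₀ with h1 | h1
    · have : t ∈ Set.Ioo (0:ℝ) δ := ⟨ht, lt_trans h1 hδ₀ltδ⟩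
      exact hφt₀le1.trans (hδ this).le
    · rcases le_or_gt t M' with h2 | h2
      · exact ht₀min ⟨h1, h2⟩
      · have : M ≤ t := le_trans (le_max_left _ _) h2.le
        exact hφt₀le1.trans (hM t this).le
  refine ⟨t₀, ht₀pos, ?_⟩
  have hleast : IsLeast (φ '' Set.Ioi 0) (φ t₀) := by
    constructor
    · exact ⟨t₀, ht₀pos, rfl⟩
    · rintro y ⟨t, ht, rfl⟩
      exact hglobal t ht
  exact hleast.csInf_eq.symm
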